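/- Let G be a finite connected simple graph with positive real edge weights, and let u and v be distinct vertices of G. Every minimum-weight u,v-cut of G is relevant, i.e., it belongs to some minimum cut basis of G. -/

import Mathlib

open Finset
open scoped Classical

variable {V : Type*}

/-- The edge boundary `∂S`: the set of edges of `G` with exactly one endpoint in `S`. -/
noncomputable def edgeBoundary [Fintype V] [DecidableEq V] (G : SimpleGraph V) (S : Finset V) :
    Finset (Sym2 V) :=
  Finset.univ.filter fun e => e ∈ G.edgeSet ∧ ∃ u v, e = s(u, v) ∧ u ∈ S ∧ v ∉ S

/-- A cutset of `G` is an edge boundary `∂S` with `∅ ≠ S ≠ V`. -/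
def IsCutset [Fintype V] [DecidableEq V] (G : SimpleGraph V) (D : Finset (Sym2 V)) : Prop :=
  ∃ S : Finset V, S ≠ ∅ ∧ S ≠ Finset.univ ∧ D = edgeBoundary G S

/-- Symmetric difference of a finite family of edge sets: the set of edges occurring in an
odd number of members of the family. -/
noncomputable def symmDiffFamily [Fintype V] [DecidableEq V] {ι : Type*} (s : Finset ι)
    (f : ι → Finset (Sym2 V)) : Finset (Sym2 V) :=
  Finset.univ.filter fun e => Odd ((s.filter fun i => e ∈ f i).card)

/-- A cut basis: a family of `n - 1` cutsets such that every element of the cut space is the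
symmetric difference of a subfamily, and no nonempty subfamily has empty symmetric
difference. -/
def IsCutBasis [Fintype V] [DecidableEq V] (G : SimpleGraph V)
    (𝒟 : Finset (Finset (Sym2 V))) : Prop :=
  𝒟.card = Fintype.card V - 1 ∧
  (∀ D ∈ 𝒟, IsCutset G D) ∧
  (∀ S : Finset V, ∃ ℬ ⊆ 𝒟, edgeBoundary G S = symmDiffFamily ℬ id) ∧
  (∀ ℬ ⊆ 𝒟, ℬ.Nonempty → symmDiffFamily ℬ id ≠ ∅)

/-- The weight `|D|` of an edge set `D`. -/
def weight (w : Sym2 V → ℝ) (D : Finset (Sym2 V)) : ℝ :=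
  ∑ e ∈ D, w e

/-- A minimum cut basis: a cut basis of minimum total weight. -/
def IsMinCutBasis [Fintype V] [DecidableEq V] (G : SimpleGraph V) (w : Sym2 V → ℝ)
    (𝒟 : Finset (Finset (Sym2 V))) : Prop :=
  IsCutBasis G 𝒟 ∧
  ∀ 𝒟' : Finset (Finset (Sym2 V)), IsCutBasis G 𝒟' →
    ∑ D ∈ 𝒟, weight w D ≤ ∑ D ∈ 𝒟', weight w D

/-- A cutset is relevant if it belongs to at least one minimum cut basis. -/
def IsRelevant [Fintype V] [DecidableEq V] (G : SimpleGraph V) (w : Sym2 V → ℝ)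
    (D : Finset (Sym2 V)) : Prop :=
  ∃ 𝒟 : Finset (Finset (Sym2 V)), IsMinCutBasis G w 𝒟 ∧ D ∈ 𝒟

/-- A `u,v`-cut: a cutset of the form `∂S` with `u ∈ S` and `v ∉ S`. -/
def IsUVCut [Fintype V] [DecidableEq V] (G : SimpleGraph V) (u v : V)
    (D : Finset (Sym2 V)) : Prop :=
  ∃ S : Finset V, u ∈ S ∧ v ∉ S ∧ D = edgeBoundary G S

/-- A minimum-weight `u,v`-cut. -/
def IsMinUVCut [Fintype V] [DecidableEq V] (G : SimpleGraph V) (w : Sym2 V → ℝ) (u v : V)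
    (D : Finset (Sym2 V)) : Prop :=
  IsUVCut G u v D ∧ ∀ D' : Finset (Sym2 V), IsUVCut G u v D' → weight w D ≤ weight w D'

/-- A minimum `u,v`-cut with respect to unit weights (cardinality). -/
def IsMinUVCutCard [Fintype V] [DecidableEq V] (G : SimpleGraph V) (u v : V)
    (D : Finset (Sym2 V)) : Prop :=
  IsUVCut G u v D ∧ ∀ D' : Finset (Sym2 V), IsUVCut G u v D' → D.card ≤ D'.card

open scoped symmDiff

section Helpers
variable [Fintype V] [DecidableEq V]

/-- Indicator function of an edge set, valued in `ZMod 2`. -/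
noncomputable def ind (X : Finset (Sym2 V)) : Sym2 V → ZMod 2 :=
  fun e => if e ∈ X then 1 else 0

lemma ind_injective : Function.Injective (ind (V := V)) := by
  intro X Y h
  ext e
  have h' := congrFun h e
  by_cases hX : e ∈ X <;> by_cases hY : e ∈ Y <;>
    simp [ind, hX, hY] at h' ⊢ <;> tauto

lemma ind_empty : ind (∅ : Finset (Sym2 V)) = 0 := by
  funext e; simp [ind]

lemma natCast_zmod_two (n : ℕ) : (n : ZMod 2) = if Odd n then 1 else 0 := by
  rw [← ZMod.natCast_mod n 2]
  rcases Nat.even_or_odd n with h | h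
  · simp [Nat.even_iff.mp h, Nat.not_odd_iff_even.mpr h]
  · simp [Nat.odd_iff.mp h, h]

lemma ind_symmDiffFamily (ℬ : Finset (Finset (Sym2 V))) :
    ind (symmDiffFamily ℬ id) = ∑ B ∈ ℬ, ind B := by
  funext e
  have : (∑ B ∈ ℬ, ind B) e = ∑ B ∈ ℬ, (if e ∈ B then (1 : ZMod 2) else 0) := by
    rw [Finset.sum_apply]; rfl
  rw [this, Finset.sum_boole, natCast_zmod_two]
  simp only [ind, symmDiffFamily, Finset.mem_filter, Finset.mem_univ, true_and, id]

lemma symmDiffFamily_eq_empty_iff (ℬ : Finset (Finset (Sym2 V))) :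
    symmDiffFamily ℬ id = ∅ ↔ ∑ B ∈ ℬ, ind B = 0 := by
  rw [← ind_symmDiffFamily, ← ind_empty]
  exact ⟨fun h => by rw [h], fun h => ind_injective h⟩

lemma ind_add_self (f : Sym2 V → ZMod 2) : f + f = 0 := by
  funext e
  have : ∀ a : ZMod 2, a + a = 0 := by decide
  exact this (f e)

lemma sum_ind_symmDiff (𝒞 ℬ : Finset (Finset (Sym2 V))) :
    ∑ X ∈ 𝒞 ∆ ℬ, ind X = ∑ X ∈ 𝒞, ind X + ∑ X ∈ ℬ, ind X := by
  have hdisj : Disjoint (𝒞 ∆ ℬ) (𝒞 ∩ ℬ) := by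
    rw [← Finset.inf_eq_inter]; exact disjoint_symmDiff_inf 𝒞 ℬ
  have hunion : 𝒞 ∆ ℬ ∪ (𝒞 ∩ ℬ) = 𝒞 ∪ ℬ := by
    exact symmDiff_sup_inf 𝒞 ℬ
  have h1 : ∑ X ∈ 𝒞 ∆ ℬ, ind X + ∑ X ∈ 𝒞 ∩ ℬ, ind X = ∑ X ∈ 𝒞 ∪ ℬ, ind X := by
    rw [← Finset.sum_union hdisj, hunion]
  have h2 : ∑ X ∈ 𝒞 ∪ ℬ, ind X + ∑ X ∈ 𝒞 ∩ ℬ, ind X = ∑ X ∈ 𝒞, ind X + ∑ X ∈ ℬ, ind X :=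
    Finset.sum_union_inter
  have h3 := ind_add_self (∑ X ∈ 𝒞 ∩ ℬ, ind X)
  calc ∑ X ∈ 𝒞 ∆ ℬ, ind X
      = ∑ X ∈ 𝒞 ∆ ℬ, ind X + (∑ X ∈ 𝒞 ∩ ℬ, ind X + ∑ X ∈ 𝒞 ∩ ℬ, ind X) := by
        rw [h3, add_zero]
    _ = (∑ X ∈ 𝒞 ∆ ℬ, ind X + ∑ X ∈ 𝒞 ∩ ℬ, ind X) + ∑ X ∈ 𝒞 ∩ ℬ, ind X := by abel
    _ = ∑ X ∈ 𝒞 ∪ ℬ, ind X + ∑ X ∈ 𝒞 ∩ ℬ, ind X := by rw [h1]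
    _ = ∑ X ∈ 𝒞, ind X + ∑ X ∈ ℬ, ind X := h2

lemma mem_edgeBoundary_iff (G : SimpleGraph V) (S : Finset V) (a b : V) :
    s(a, b) ∈ edgeBoundary G S ↔ G.Adj a b ∧ ((a ∈ S ∧ b ∉ S) ∨ (b ∈ S ∧ a ∉ S)) := by
  simp only [edgeBoundary, Finset.mem_filter, Finset.mem_univ, true_and,
    SimpleGraph.mem_edgeSet]
  constructor
  · rintro ⟨h, x, y, hxy, hx, hy⟩
    refine ⟨h, ?_⟩
    rw [Sym2.eq_iff] at hxy
    rcases hxy with ⟨rfl, rfl⟩ | ⟨rfl, rfl⟩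
    · exact Or.inl ⟨hx, hy⟩
    · exact Or.inr ⟨hx, hy⟩
  · rintro ⟨h, ⟨ha, hb⟩ | ⟨hb, ha⟩⟩
    · exact ⟨h, a, b, rfl, ha, hb⟩
    · exact ⟨h, b, a, Sym2.eq_swap, hb, ha⟩

lemma not_mem_edgeBoundary {G : SimpleGraph V} {e : Sym2 V} (h : e ∉ G.edgeSet)
    (S : Finset V) : e ∉ edgeBoundary G S := by
  simp only [edgeBoundary, Finset.mem_filter, Finset.mem_univ, true_and]
  tauto

lemma ind_edgeBoundary {G : SimpleGraph V} {a b : V} (hab : G.Adj a b) (S : Finset V) :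
    ind (edgeBoundary G S) s(a, b)
      = (if a ∈ S then (1 : ZMod 2) else 0) + (if b ∈ S then 1 else 0) := by
  by_cases ha : a ∈ S <;> by_cases hb : b ∈ S <;>
    simp [ind, mem_edgeBoundary_iff, hab, ha, hb] <;> decide

lemma edgeBoundary_compl (G : SimpleGraph V) (S : Finset V) :
    edgeBoundary G Sᶜ = edgeBoundary G S := by
  ext e
  induction e using Sym2.ind with
  | _ a b =>
    simp only [mem_edgeBoundary_iff, Finset.mem_compl]
    tauto

lemma exists_crossing_edge {G : SimpleGraph V} {S : Finset V} :
    ∀ {a b : V}, G.Walk a b → a ∈ S → b ∉ S → (edgeBoundary G S).Nonempty := by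
  intro a b w
  induction w with
  | nil => intro ha hb; exact absurd ha hb
  | @cons a c b h q ih =>
    intro ha hb
    by_cases hc : c ∈ S
    · exact ih hc hb
    · exact ⟨s(a, c), by rw [mem_edgeBoundary_iff]; exact ⟨h, Or.inl ⟨ha, hc⟩⟩⟩

lemma edgeBoundary_nonempty {G : SimpleGraph V} (hG : G.Connected) {S : Finset V}
    (h1 : S ≠ ∅) (h2 : S ≠ Finset.univ) : edgeBoundary G S ≠ ∅ := by
  obtain ⟨a, ha⟩ := Finset.nonempty_iff_ne_empty.mpr h1
  obtain ⟨b, hb⟩ : ∃ b, b ∉ S := by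
    by_contra hcon
    push_neg at hcon
    exact h2 (Finset.eq_univ_of_forall hcon)
  obtain ⟨w⟩ := hG.preconnected a b
  exact Finset.nonempty_iff_ne_empty.mp (exists_crossing_edge w ha hb)

lemma walk_sum_ind_edgeBoundary {G : SimpleGraph V} {a b : V} (p : G.Walk a b) (S : Finset V) :
    (p.edges.map (ind (edgeBoundary G S))).sum
      = (if a ∈ S then (1 : ZMod 2) else 0) + (if b ∈ S then 1 else 0) := by
  induction p with
  | nil =>
    simp only [SimpleGraph.Walk.edges_nil, List.map_nil, List.sum_nil]
    split_ifs <;> decide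
  | @cons a c b h q ih =>
    simp only [SimpleGraph.Walk.edges_cons, List.map_cons, List.sum_cons, ih,
      ind_edgeBoundary h]
    split_ifs <;> decide

lemma list_sum_map_add {α M : Type*} [AddCommMonoid M] (l : List α) (f g : α → M) :
    (l.map (fun x => f x + g x)).sum = (l.map f).sum + (l.map g).sum := by
  induction l with
  | nil => simp
  | cons x l ih => simp only [List.map_cons, List.sum_cons, ih]; abel

lemma list_sum_map_finset_sum {α ι M : Type*} [AddCommMonoid M] [DecidableEq ι]
    (l : List α) (s : Finset ι) (g : ι → α → M) :
    (l.map (fun e => ∑ i ∈ s, g i e)).sum = ∑ i ∈ s, (l.map (g i)).sum := by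
  induction s using Finset.induction with
  | empty => simp
  | @insert a s hnot ih =>
    rw [Finset.sum_insert hnot]
    simp only [Finset.sum_insert hnot]
    rw [list_sum_map_add, ih]

/-- Sum over vertices of singleton boundaries equals boundary of the set. -/
lemma ind_sum_singletons (G : SimpleGraph V) (T : Finset V) :
    ∑ x ∈ T, ind (edgeBoundary G ({x} : Finset V)) = ind (edgeBoundary G T) := by
  funext e
  induction e using Sym2.ind with
  | _ a b =>
    rw [Finset.sum_apply]
    by_cases hab : G.Adj a b
    · have hne : a ≠ b := hab.ne
      have : ∀ x ∈ T, ind (edgeBoundary G ({x} : Finset V)) s(a, b)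
          = (if a = x then (1 : ZMod 2) else 0) + (if b = x then 1 else 0) := by
        intro x _
        rw [ind_edgeBoundary hab]
        simp [Finset.mem_singleton]
      rw [Finset.sum_congr rfl this, Finset.sum_add_distrib, ind_edgeBoundary hab,
        Finset.sum_ite_eq T a (fun _ => (1 : ZMod 2)),
        Finset.sum_ite_eq T b (fun _ => (1 : ZMod 2))]
    · have h1 : s(a,b) ∉ G.edgeSet := fun h => hab h
      have : ∀ x ∈ T, ind (edgeBoundary G ({x} : Finset V)) s(a, b) = 0 := by
        intro x _
        simp [ind, not_mem_edgeBoundary h1]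
      rw [Finset.sum_congr rfl this]
      simp [ind, not_mem_edgeBoundary h1]

lemma singleton_boundary_injOn {G : SimpleGraph V} (hG : G.Connected) (v0 : V) :
    Set.InjOn (fun x => edgeBoundary G ({x} : Finset V))
      ((Finset.univ.erase v0 : Finset V) : Set V) := by
  intro x hx y hy hxy
  by_contra hne
  simp only [Finset.coe_erase, Set.mem_diff, Finset.mem_erase] at hx hy
  have hx0 : x ≠ v0 := by simpa using hx.2
  have hy0 : y ≠ v0 := by simpa using hy.2
  simp only at hxy
  -- every neighbor of x is y
  have nbx : ∀ z, G.Adj x z → z = y := by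
    intro z hz
    have hmem : s(x, z) ∈ edgeBoundary G ({x} : Finset V) := by
      rw [mem_edgeBoundary_iff]
      exact ⟨hz, Or.inl ⟨Finset.mem_singleton_self x, by simp [hz.ne']⟩⟩
    rw [hxy, mem_edgeBoundary_iff] at hmem
    rcases hmem.2 with ⟨h1, _⟩ | ⟨h1, h2⟩
    · exact absurd (Finset.mem_singleton.mp h1) hne
    · exact Finset.mem_singleton.mp h1
  have nby : ∀ z, G.Adj y z → z = x := by
    intro z hz
    have hmem : s(y, z) ∈ edgeBoundary G ({y} : Finset V) := by
      rw [mem_edgeBoundary_iff]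
      exact ⟨hz, Or.inl ⟨Finset.mem_singleton_self y, by simp [hz.ne']⟩⟩
    rw [← hxy, mem_edgeBoundary_iff] at hmem
    rcases hmem.2 with ⟨h1, _⟩ | ⟨h1, h2⟩
    · exact absurd (Finset.mem_singleton.mp h1) (Ne.symm hne)
    · exact Finset.mem_singleton.mp h1
  have key : ∀ {s t : V}, G.Walk s t → (s = x ∨ s = y) → (t = x ∨ t = y) := by
    intro s t wlk
    induction wlk with
    | nil => exact id
    | @cons s c t h q ih =>
      rintro (rfl | rfl)
      · exact ih (Or.inr (nbx c h))
      · exact ih (Or.inl (nby c h))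
  obtain ⟨wlk⟩ := hG.preconnected x v0
  rcases key wlk (Or.inl rfl) with h | h
  · exact hx0 h.symm
  · exact hy0 h.symm

lemma exists_cutBasis (G : SimpleGraph V) (hG : G.Connected) (v0 : V) :
    ∃ 𝒟, IsCutBasis G 𝒟 := by
  set f : V → Finset (Sym2 V) := fun x => edgeBoundary G ({x} : Finset V) with hf
  have hinj := singleton_boundary_injOn hG v0
  refine ⟨(Finset.univ.erase v0).image f, ?_, ?_, ?_, ?_⟩
  · rw [Finset.card_image_of_injOn hinj, Finset.card_erase_of_mem (Finset.mem_univ v0),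
      Finset.card_univ]
  · intro B hB
    obtain ⟨x, hx, rfl⟩ := Finset.mem_image.mp hB
    refine ⟨{x}, Finset.singleton_ne_empty x, fun h => ?_, rfl⟩
    have : v0 ∈ ({x} : Finset V) := h ▸ Finset.mem_univ v0
    exact (Finset.mem_erase.mp hx).1 (Finset.mem_singleton.mp this).symm
  · intro S
    set S' := if v0 ∈ S then Sᶜ else S with hS'
    have hv0 : v0 ∉ S' := by
      rw [hS']; split <;> simp_all
    have hbd : edgeBoundary G S = edgeBoundary G S' := by
      rw [hS']; split
      · rw [edgeBoundary_compl]
      · rfl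
    have hsub : S' ⊆ Finset.univ.erase v0 := fun x hx =>
      Finset.mem_erase.mpr ⟨fun h => hv0 (h ▸ hx), Finset.mem_univ x⟩
    refine ⟨S'.image f, Finset.image_subset_image hsub, ind_injective ?_⟩
    rw [ind_symmDiffFamily, Finset.sum_image (fun x hx y hy h => hinj (hsub hx) (hsub hy) h),
      hbd, ← ind_sum_singletons]
  · intro ℬ hℬ hne hempty
    set T := (Finset.univ.erase v0).filter (fun x => f x ∈ ℬ) with hT
    have hTsub : T ⊆ Finset.univ.erase v0 := Finset.filter_subset _ _
    have hℬT : ℬ = T.image f := by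
      ext B
      constructor
      · intro hB
        obtain ⟨x, hx, rfl⟩ := Finset.mem_image.mp (hℬ hB)
        exact Finset.mem_image.mpr ⟨x, Finset.mem_filter.mpr ⟨hx, hB⟩, rfl⟩
      · intro hB
        obtain ⟨x, hx, rfl⟩ := Finset.mem_image.mp hB
        exact (Finset.mem_filter.mp hx).2
    have hTne : T ≠ ∅ := by
      obtain ⟨B, hB⟩ := hne
      obtain ⟨x, hx, rfl⟩ := Finset.mem_image.mp (hℬ hB)
      exact Finset.ne_empty_of_mem (Finset.mem_filter.mpr ⟨hx, hB⟩)
    have hTnu : T ≠ Finset.univ := fun h => by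
      have : v0 ∈ T := h ▸ Finset.mem_univ v0
      exact (Finset.mem_erase.mp (hTsub this)).1 rfl
    have : symmDiffFamily ℬ id = edgeBoundary G T := by
      apply ind_injective
      rw [ind_symmDiffFamily, hℬT,
        Finset.sum_image (fun x hx y hy h => hinj (hTsub hx) (hTsub hy) h),
        ind_sum_singletons]
    rw [this] at hempty
    exact edgeBoundary_nonempty hG hTne hTnu hempty

end Helpers

/-- In a finite connected simple graph with positive edge weights, every
minimum-weight `u,v`-cut for distinct vertices `u, v` is relevant. -/
theorem min_uv_cut_is_relevant [Fintype V] [DecidableEq V] (G : SimpleGraph V)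
    (hG : G.Connected) (w : Sym2 V → ℝ) (hw : ∀ e ∈ G.edgeSet, 0 < w e)
    (u v : V) (huv : u ≠ v) (D : Finset (Sym2 V)) (hD : IsMinUVCut G w u v D) :
    IsRelevant G w D := by
  classical
  obtain ⟨⟨S, huS, hvS, hDS⟩, hmin⟩ := hD
  -- a minimum cut basis exists
  obtain ⟨𝒟₀, h𝒟₀⟩ := exists_cutBasis G hG v
  obtain ⟨𝒟, h𝒟mem, h𝒟min⟩ := Finset.exists_min_image
    (Finset.univ.filter fun 𝒜 => IsCutBasis G 𝒜) (fun 𝒜 => ∑ X ∈ 𝒜, weight w X)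
    ⟨𝒟₀, by simp [h𝒟₀]⟩
  have hbasis : IsCutBasis G 𝒟 := (Finset.mem_filter.mp h𝒟mem).2
  have hminB : ∀ 𝒜, IsCutBasis G 𝒜 → ∑ X ∈ 𝒟, weight w X ≤ ∑ X ∈ 𝒜, weight w X :=
    fun 𝒜 h => h𝒟min 𝒜 (by simp [h])
  by_cases hDin : D ∈ 𝒟
  · exact ⟨𝒟, ⟨hbasis, hminB⟩, hDin⟩
  obtain ⟨hcard, hcuts, hspan, hindep⟩ := hbasis
  obtain ⟨ℬ, hℬsub, hℬeq⟩ := hspan S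
  have hindD : ind D = ∑ B ∈ ℬ, ind B := by
    rw [hDS, hℬeq, ind_symmDiffFamily]
  -- the walk functional
  obtain ⟨p⟩ := hG.preconnected u v
  have hLD : (p.edges.map (ind D)).sum = 1 := by
    rw [hDS, walk_sum_ind_edgeBoundary p S]
    simp [huS, hvS]
  have hsum : ∑ B ∈ ℬ, (p.edges.map (ind B)).sum = 1 := by
    rw [← hLD, hindD]
    have h1 : (∑ B ∈ ℬ, ind B) = fun e => ∑ B ∈ ℬ, ind B e :=
      funext fun e => by rw [Finset.sum_apply]
    rw [h1, list_sum_map_finset_sum]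
  -- some member of ℬ separates u and v
  have hex : ∃ B ∈ ℬ, (p.edges.map (ind B)).sum = 1 := by
    by_contra hcon
    push_neg at hcon
    have : ∀ B ∈ ℬ, (p.edges.map (ind B)).sum = 0 := by
      intro B hB
      have h2 : ∀ a : ZMod 2, a ≠ 1 → a = 0 := by decide
      exact h2 _ (hcon B hB)
    rw [Finset.sum_congr rfl this] at hsum
    simp at hsum
  obtain ⟨B, hBℬ, hB1⟩ := hex
  have hB𝒟 : B ∈ 𝒟 := hℬsub hBℬ
  obtain ⟨T, hT1, hT2, hBT⟩ := hcuts B hB𝒟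
  -- B is a u,v-cut
  have hBuv : IsUVCut G u v B := by
    rw [hBT, walk_sum_ind_edgeBoundary p T] at hB1
    by_cases hu : u ∈ T <;> by_cases hv : v ∈ T <;> simp [hu, hv] at hB1
    · exact ⟨T, hu, hv, hBT⟩
    · refine ⟨Tᶜ, Finset.mem_compl.mpr hu, fun h => Finset.mem_compl.mp h hv, ?_⟩
      rw [hBT, edgeBoundary_compl]
  have hwDB : weight w D ≤ weight w B := hmin B hBuv
  have hBD : B ≠ D := fun h => hDin (h ▸ hB𝒟)
  have hDne : D ∉ 𝒟.erase B := fun h => hDin (Finset.mem_of_mem_erase h)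
  -- the exchanged basis
  set 𝒟' : Finset (Finset (Sym2 V)) := insert D (𝒟.erase B) with h𝒟'
  have hD'basis : IsCutBasis G 𝒟' := by
    refine ⟨?_, ?_, ?_, ?_⟩
    · rw [h𝒟', Finset.card_insert_of_notMem hDne, Finset.card_erase_of_mem hB𝒟,
        Nat.sub_add_cancel (Finset.card_pos.mpr ⟨B, hB𝒟⟩), hcard]
    · intro X hX
      rcases Finset.mem_insert.mp hX with rfl | hX
      · exact ⟨S, Finset.ne_empty_of_mem huS, fun h => hvS (h ▸ Finset.mem_univ v), hDS⟩
      · exact hcuts X (Finset.mem_of_mem_erase hX)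
    · intro S'
      obtain ⟨𝒞, h𝒞sub, h𝒞eq⟩ := hspan S'
      by_cases hB𝒞 : B ∈ 𝒞
      · have hsub2 : 𝒞 ∆ ℬ ⊆ 𝒟.erase B := by
          intro X hX
          rcases Finset.mem_symmDiff.mp hX with ⟨h1, h2⟩ | ⟨h1, h2⟩
          · exact Finset.mem_erase.mpr ⟨fun h => h2 (h ▸ hBℬ), h𝒞sub h1⟩
          · exact Finset.mem_erase.mpr ⟨fun h => h2 (h ▸ hB𝒞), hℬsub h1⟩
        have hDnm : D ∉ 𝒞 ∆ ℬ := fun h => hDne (hsub2 h)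
        refine ⟨insert D (𝒞 ∆ ℬ), Finset.insert_subset_insert D hsub2, ?_⟩
        apply ind_injective
        rw [h𝒞eq, ind_symmDiffFamily, ind_symmDiffFamily, Finset.sum_insert hDnm,
          sum_ind_symmDiff, hindD]
        have hrw : (∑ X ∈ ℬ, ind X) + (∑ X ∈ 𝒞, ind X + ∑ X ∈ ℬ, ind X)
            = ∑ X ∈ 𝒞, ind X + ((∑ X ∈ ℬ, ind X) + ∑ X ∈ ℬ, ind X) := by abel
        rw [hrw, ind_add_self, add_zero]
      · refine ⟨𝒞, fun X hX => ?_, h𝒞eq⟩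
        exact Finset.mem_insert_of_mem
          (Finset.mem_erase.mpr ⟨fun h => hB𝒞 (h ▸ hX), h𝒞sub hX⟩)
    · intro 𝒞 h𝒞sub h𝒞ne hempty
      have hsum0 : ∑ X ∈ 𝒞, ind X = 0 := (symmDiffFamily_eq_empty_iff 𝒞).mp hempty
      by_cases hD𝒞 : D ∈ 𝒞
      · have herasesub : 𝒞.erase D ⊆ 𝒟.erase B := by
          intro X hX
          have hX1 := Finset.mem_of_mem_erase hX
          have hX2 := (Finset.mem_erase.mp hX).1
          rcases Finset.mem_insert.mp (h𝒞sub hX1) with rfl | h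
          · exact absurd rfl hX2
          · exact h
        have hBnm : B ∉ 𝒞.erase D := fun h => (Finset.mem_erase.mp (herasesub h)).1 rfl
        have hBmem : B ∈ (𝒞.erase D) ∆ ℬ := Finset.mem_symmDiff.mpr (Or.inr ⟨hBℬ, hBnm⟩)
        have hsub3 : (𝒞.erase D) ∆ ℬ ⊆ 𝒟 := by
          intro X hX
          rcases Finset.mem_symmDiff.mp hX with ⟨h1, _⟩ | ⟨h1, _⟩
          · exact Finset.mem_of_mem_erase (herasesub h1)
          · exact hℬsub h1
        refine hindep _ hsub3 ⟨B, hBmem⟩ ?_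
        rw [symmDiffFamily_eq_empty_iff, sum_ind_symmDiff]
        have herw : ind D + ∑ X ∈ 𝒞.erase D, ind X = ∑ X ∈ 𝒞, ind X :=
          Finset.add_sum_erase 𝒞 ind hD𝒞
        have : ∑ X ∈ 𝒞.erase D, ind X = ind D := by
          have h4 := ind_add_self (ind D)
          calc ∑ X ∈ 𝒞.erase D, ind X
              = ind D + (ind D + ∑ X ∈ 𝒞.erase D, ind X) := by
                rw [← add_assoc, h4, zero_add]
            _ = ind D + 0 := by rw [herw, hsum0]
            _ = ind D := add_zero _
        rw [this, hindD, ind_add_self]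
      · have : 𝒞 ⊆ 𝒟 := by
          intro X hX
          rcases Finset.mem_insert.mp (h𝒞sub hX) with rfl | h
          · exact absurd hX hD𝒞
          · exact Finset.mem_of_mem_erase h
        exact hindep 𝒞 this h𝒞ne hempty
  -- weight comparison
  have hwle : ∑ X ∈ 𝒟', weight w X ≤ ∑ X ∈ 𝒟, weight w X := by
    rw [h𝒟', Finset.sum_insert hDne]
    have h5 : weight w B + ∑ X ∈ 𝒟.erase B, weight w X = ∑ X ∈ 𝒟, weight w X :=
      Finset.add_sum_erase 𝒟 (weight w) hB𝒟
    linarith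
  exact ⟨𝒟', ⟨hD'basis, fun 𝒜 h𝒜 => le_trans hwle (hminB 𝒜 h𝒜)⟩,
    Finset.mem_insert_self D _⟩
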